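/- Let G be a group and H a subgroup of finite index. Then there exists a finite set Y ⊆ G that is simultaneously a complete set of left coset representatives and a complete set of right coset representatives of H in G, i.e. G is both the disjoint union of the sets yH for y ∈ Y and the disjoint union of the sets Hy for y ∈ Y. -/

import Mathlib

open Finset

/-- Ore's theorem for finite groups, proved via Hall's marriage theorem. -/
private theorem ore_finite {Q : Type*} [Group Q] [Fintype Q] (K : Subgroup Q) :
    ∃ Y : Finset Q,
      (∀ g : Q, ∃! y, y ∈ Y ∧ y⁻¹ * g ∈ K) ∧
      (∀ g : Q, ∃! y, y ∈ Y ∧ g * y⁻¹ ∈ K) := by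
  classical
  -- fibers of the left quotient map have size `card K`
  have fib : ∀ L : Q ⧸ K,
      (univ.filter fun g : Q => (g : Q ⧸ K) = L).card = Fintype.card K := by
    intro L
    induction L using QuotientGroup.induction_on with
    | H x =>
      rw [← Finset.card_univ]
      refine (Finset.card_bij (fun (k : K) _ => x * (k : Q)) ?_ ?_ ?_).symm
      · intro k _
        simp only [mem_filter, mem_univ, true_and]
        exact (QuotientGroup.eq.mpr (by simp [k.2])).symm
      · intro a _ b _ hab
        exact Subtype.ext (mul_left_cancel hab)
      · intro g hg
        simp only [mem_filter, mem_univ, true_and] at hg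
        have hx : x⁻¹ * g ∈ K := QuotientGroup.eq.mp hg.symm
        exact ⟨⟨x⁻¹ * g, hx⟩, mem_univ _, by group⟩
  -- fibers of `g ↦ ⟦g⁻¹⟧` also have size `card K`
  have fib' : ∀ M : Q ⧸ K,
      (univ.filter fun g : Q => ((g⁻¹ : Q) : Q ⧸ K) = M).card = Fintype.card K := by
    intro M
    rw [← fib M]
    refine Finset.card_bij (fun g _ => g⁻¹) ?_ ?_ ?_
    · intro g hg
      simp only [mem_filter, mem_univ, true_and] at hg ⊢
      exact hg
    · intro a _ b _ hab
      exact inv_injective hab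
    · intro g hg
      simp only [mem_filter, mem_univ, true_and] at hg
      exact ⟨g⁻¹, by simp only [mem_filter, mem_univ, true_and, inv_inv]; exact hg, inv_inv g⟩
  -- the relation : a left coset is related to a right coset (encoded as the left
  -- coset of inverses) if they intersect
  set r : Q ⧸ K → Q ⧸ K → Prop :=
    fun L M => ∃ g : Q, (g : Q ⧸ K) = L ∧ ((g⁻¹ : Q) : Q ⧸ K) = M with hr
  set R : SetRel (Q ⧸ K) (Q ⧸ K) := {p | r p.1 p.2} with hR
  haveI : ∀ a, Fintype (SetRel.image R {a}) := fun a => Fintype.ofFinite _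
  have hall : ∀ A : Finset (Q ⧸ K), A.card ≤ Fintype.card (SetRel.image R ↑A) := by
    intro A
    rw [← Set.toFinset_card]
    set T : Finset (Q ⧸ K) := (SetRel.image R ↑A).toFinset with hT
    set S : Finset Q := univ.filter fun g => (g : Q ⧸ K) ∈ A with hS
    set S' : Finset Q := univ.filter fun g => ((g⁻¹ : Q) : Q ⧸ K) ∈ T with hS'
    have hSS' : S ⊆ S' := by
      intro g hg
      simp only [hS, hS', mem_filter, mem_univ, true_and] at hg ⊢
      rw [hT, Set.mem_toFinset]
      exact ⟨(g : Q ⧸ K), hg, g, rfl, rfl⟩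
    have hScard : S.card = A.card * Fintype.card K := by
      rw [Finset.card_eq_sum_card_fiberwise
        (f := fun g : Q => (g : Q ⧸ K)) (t := A)
        (fun g hg => by simpa [hS] using hg)]
      rw [Finset.sum_congr rfl (fun L hL => ?_), Finset.sum_const, smul_eq_mul]
      rw [← fib L]
      congr 1
      ext g
      simp only [hS, Finset.filter_filter, mem_filter, mem_univ, true_and]
      exact ⟨fun h => h.2, fun h => ⟨h ▸ hL, h⟩⟩
    have hS'card : S'.card = T.card * Fintype.card K := by
      rw [Finset.card_eq_sum_card_fiberwise
        (f := fun g : Q => ((g⁻¹ : Q) : Q ⧸ K)) (t := T)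
        (fun g hg => by simpa [hS'] using hg)]
      rw [Finset.sum_congr rfl (fun M hM => ?_), Finset.sum_const, smul_eq_mul]
      rw [← fib' M]
      congr 1
      ext g
      simp only [hS', Finset.filter_filter, mem_filter, mem_univ, true_and]
      exact ⟨fun h => h.2, fun h => ⟨h ▸ hM, h⟩⟩
    have hpos : 0 < Fintype.card K := Fintype.card_pos
    have := Finset.card_le_card hSS'
    rw [hScard, hS'card] at this
    exact Nat.le_of_mul_le_mul_right this hpos
  obtain ⟨f, hfinj, hfr⟩ :=
    (Fintype.all_card_le_rel_image_card_iff_exists_injective R).mp hall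
  have hfbij : Function.Bijective f := Finite.injective_iff_bijective.mp hfinj
  choose c hc1 hc2 using hfr
  simp only at hc1 hc2
  refine ⟨univ.image c, ?_, ?_⟩
  · intro g
    refine ⟨c (g : Q ⧸ K), ⟨mem_image_of_mem c (mem_univ _), ?_⟩, ?_⟩
    · exact QuotientGroup.eq.mp (hc1 (g : Q ⧸ K))
    · rintro y ⟨hy, hyK⟩
      obtain ⟨L, -, rfl⟩ := Finset.mem_image.mp hy
      have : ((c L : Q) : Q ⧸ K) = (g : Q ⧸ K) := QuotientGroup.eq.mpr hyK
      rw [hc1 L] at this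
      rw [this]
  · intro g
    obtain ⟨L₀, hL₀⟩ := hfbij.surjective ((g⁻¹ : Q) : Q ⧸ K)
    have key : ∀ L : Q ⧸ K, (g * (c L)⁻¹ ∈ K) ↔ f L = ((g⁻¹ : Q) : Q ⧸ K) := by
      intro L
      rw [← hc2 L]
      rw [QuotientGroup.eq]
      constructor
      · intro h
        simpa [mul_inv_rev] using K.inv_mem h
      · intro h
        simpa [mul_inv_rev] using K.inv_mem h
    refine ⟨c L₀, ⟨mem_image_of_mem c (mem_univ _), (key L₀).mpr hL₀⟩, ?_⟩
    rintro y ⟨hy, hyK⟩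
    obtain ⟨L, -, rfl⟩ := Finset.mem_image.mp hy
    have : f L = f L₀ := by rw [(key L).mp hyK, hL₀]
    rw [hfinj this]

/-- Ore's theorem on common coset representatives: if `H` is a subgroup of finite index in
`G`, there is a finite set `Y` that is simultaneously a complete set of left coset
representatives and a complete set of right coset representatives of `H` in `G`:
every `g` lies in `yH` for a unique `y ∈ Y`, and in `Hy` for a unique `y ∈ Y`. -/
theorem exists_common_coset_representatives (G : Type*) [Group G]
    (H : Subgroup G) (hH : H.index ≠ 0) :
    ∃ Y : Finset G,
      (∀ g : G, ∃! y, y ∈ Y ∧ y⁻¹ * g ∈ H) ∧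
      (∀ g : G, ∃! y, y ∈ Y ∧ g * y⁻¹ ∈ H) := by
  classical
  haveI : H.FiniteIndex := ⟨hH⟩
  set N := H.normalCore with hN
  haveI : Finite (G ⧸ N) := Subgroup.finite_quotient_of_finiteIndex (H := N)
  haveI := Fintype.ofFinite (G ⧸ N)
  set π : G →* G ⧸ N := QuotientGroup.mk' N with hπ
  set K : Subgroup (G ⧸ N) := H.map π with hK
  have hmem : ∀ x : G, π x ∈ K ↔ x ∈ H := by
    intro x
    constructor
    · intro hx
      have hx' : x ∈ (H.map π).comap π := hx
      rwa [Subgroup.comap_map_eq, QuotientGroup.ker_mk',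
        sup_of_le_left H.normalCore_le] at hx'
    · exact fun hx => Subgroup.mem_map_of_mem π hx
  have hout : ∀ q : G ⧸ N, π q.out = q := fun q => QuotientGroup.out_eq' q
  obtain ⟨Yb, h1, h2⟩ := ore_finite K
  refine ⟨Yb.image Quotient.out, ?_, ?_⟩
  · intro g
    obtain ⟨yb, ⟨hyb, hybK⟩, huniq⟩ := h1 (π g)
    refine ⟨yb.out, ⟨mem_image_of_mem _ hyb, ?_⟩, ?_⟩
    · rw [← hmem]
      simpa [map_mul, map_inv, hout yb] using hybK
    · rintro y ⟨hy, hyH⟩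
      obtain ⟨q, hq, rfl⟩ := Finset.mem_image.mp hy
      have : q = yb := by
        refine huniq q ⟨hq, ?_⟩
        have := (hmem _).mpr hyH
        simpa [map_mul, map_inv, hout q] using this
      rw [this]
  · intro g
    obtain ⟨yb, ⟨hyb, hybK⟩, huniq⟩ := h2 (π g)
    refine ⟨yb.out, ⟨mem_image_of_mem _ hyb, ?_⟩, ?_⟩
    · rw [← hmem]
      simpa [map_mul, map_inv, hout yb] using hybK
    · rintro y ⟨hy, hyH⟩
      obtain ⟨q, hq, rfl⟩ := Finset.mem_image.mp hy
      have : q = yb := by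
        refine huniq q ⟨hq, ?_⟩
        have := (hmem _).mpr hyH
        simpa [map_mul, map_inv, hout q] using this
      rw [this]
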